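/- arXiv:2112.14840 — 4 statements merged into one kernel-verified Lean document; each statement's English description precedes it below -/
import Mathlib

section
/- Let H be any subgraph of G that contains the k-core G_k of G (every vertex and edge of G_k belongs to H). Then the k-core of H equals the k-core of G, and moreover for every vertex v of H with coreness at least k in G, the coreness of v in H equals the coreness of v in G. -/
open scoped Classical
open Finset

noncomputable section

variable {V : Type*} [Fintype V]

/-- `S` induces a subgraph of `G` in which every vertex has degree at least `k`. -/
def IsCoreSet (G : SimpleGraph V) (k : ℕ) (S : Finset V) : Prop :=
  ∀ v ∈ S, k ≤ (S.filter (G.Adj v)).card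

/-- The vertex set of the `k`-core of `G`: all vertices lying in some induced
subgraph of minimum degree at least `k`. -/
def coreSet (G : SimpleGraph V) (k : ℕ) : Finset V :=
  Finset.univ.filter fun v => ∃ S : Finset V, IsCoreSet G k S ∧ v ∈ S

/-- The coreness of `v`: the largest `k` such that `v` belongs to the `k`-core. -/
def coreness (G : SimpleGraph V) (v : V) : ℕ :=
  Nat.findGreatest (fun k => v ∈ coreSet G k) (Fintype.card V)

lemma mem_coreSet_iff {G : SimpleGraph V} {k : ℕ} {v : V} :
    v ∈ coreSet G k ↔ ∃ S : Finset V, IsCoreSet G k S ∧ v ∈ S := by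
  simp [coreSet]

/-- A core set for `H` is a core set for any supergraph `G`. -/
lemma coreSet_mono_graph {G H : SimpleGraph V} (hle : H ≤ G) (k : ℕ) :
    coreSet H k ⊆ coreSet G k := by
  intro v hv
  obtain ⟨S, hS, hvS⟩ := mem_coreSet_iff.1 hv
  refine mem_coreSet_iff.2 ⟨S, fun u hu => le_trans (hS u hu) ?_, hvS⟩
  exact Finset.card_le_card (Finset.monotone_filter_right _ fun w _ hadj => hle hadj)

lemma coreSet_anti {G : SimpleGraph V} {j k : ℕ} (h : k ≤ j) :
    coreSet G j ⊆ coreSet G k := by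
  intro v hv
  obtain ⟨S, hS, hvS⟩ := mem_coreSet_iff.1 hv
  exact mem_coreSet_iff.2 ⟨S, fun u hu => le_trans h (hS u hu), hvS⟩

/-- The `k`-core set is itself a core set. -/
lemma isCoreSet_coreSet (G : SimpleGraph V) (k : ℕ) : IsCoreSet G k (coreSet G k) := by
  intro v hv
  obtain ⟨S, hS, hvS⟩ := mem_coreSet_iff.1 hv
  refine le_trans (hS v hvS) (Finset.card_le_card ?_)
  intro u hu
  rw [Finset.mem_filter] at hu ⊢
  exact ⟨mem_coreSet_iff.2 ⟨S, hS, hu.1⟩, hu.2⟩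

lemma mem_coreSet_zero (G : SimpleGraph V) (v : V) : v ∈ coreSet G 0 :=
  mem_coreSet_iff.2 ⟨{v}, fun _ _ => Nat.zero_le _, Finset.mem_singleton_self v⟩

theorem coreSet_of_supergraph_of_kcore (G H : SimpleGraph V) (k : ℕ) (hle : H ≤ G)
    (hcore : ∀ u v : V, u ∈ coreSet G k → v ∈ coreSet G k → G.Adj u v → H.Adj u v) :
    coreSet H k = coreSet G k ∧
    ∀ v : V, k ≤ coreness G v → coreness H v = coreness G v := by
  -- key: for every `j ≥ k`, `coreSet G j ⊆ coreSet H j`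
  have key : ∀ j : ℕ, k ≤ j → coreSet G j ⊆ coreSet H j := by
    intro j hkj v hv
    refine mem_coreSet_iff.2 ⟨coreSet G j, fun u hu => ?_, hv⟩
    refine le_trans (isCoreSet_coreSet G j u hu) (Finset.card_le_card ?_)
    intro w hw
    rw [Finset.mem_filter] at hw ⊢
    exact ⟨hw.1, hcore u w (coreSet_anti hkj hu) (coreSet_anti hkj hw.1) hw.2⟩
  constructor
  · exact le_antisymm (coreSet_mono_graph hle k) (key k le_rfl)
  · intro v hv
    refine le_antisymm ?_ ?_
    · exact Nat.findGreatest_mono (fun j hj => coreSet_mono_graph hle j hj) le_rfl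
    · -- `v ∈ coreSet G (coreness G v)`
      have hPv : v ∈ coreSet G (coreness G v) := by
        rcases Nat.eq_zero_or_pos (coreness G v) with h0 | h0
        · rw [h0]; exact mem_coreSet_zero G v
        · exact Nat.findGreatest_of_ne_zero rfl (Nat.pos_iff_ne_zero.1 h0)
      exact Nat.le_findGreatest (Nat.findGreatest_le _) (key _ hv hPv)

end
end

section
/- Let v be a vertex not in the k-core G_k, with E(v) neighbors in G_k. If coreness(v) = 1 in G and E(v) = 1, then every neighbor of v outside G_k has coreness at most 1 in G. -/
open scoped Classical
open Finset

noncomputable section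

variable {V : Type*} [Fintype V]

/-- The external information of `v` w.r.t. the `k`-core: the number of
neighbors of `v` that belong to the `k`-core. -/
def extInfo (G : SimpleGraph V) (k : ℕ) (v : V) : ℕ :=
  ((coreSet G k).filter (G.Adj v)).card

theorem neighbors_outside_core_coreness_le_one (G : SimpleGraph V) (k : ℕ) (hk : 2 ≤ k)
    (v : V) (hv : v ∉ coreSet G k) (h1 : coreness G v = 1) (hE : extInfo G k v = 1) :
    ∀ u : V, G.Adj v u → u ∉ coreSet G k → coreness G u ≤ 1 := by
  intro u hadj hu
  by_contra h
  push_neg at h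
  -- u is in the 2-core: there is a set S with min degree ≥ 2 containing u
  have hum : u ∈ coreSet G (coreness G u) := by
    have := Nat.findGreatest_of_ne_zero (P := fun k => u ∈ coreSet G k)
      (n := Fintype.card V) rfl (show coreness G u ≠ 0 by omega)
    exact this
  rw [coreSet, mem_filter] at hum
  obtain ⟨-, S, hS, huS⟩ := hum
  have hS2 : IsCoreSet G 2 S := fun x hx => le_trans h (hS x hx)
  -- w : the unique neighbor of v in the k-core
  rw [extInfo, card_eq_one] at hE
  obtain ⟨w, hw⟩ := hE
  have hwmem : w ∈ (coreSet G k).filter (G.Adj v) := hw ▸ mem_singleton_self w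
  rw [mem_filter] at hwmem
  obtain ⟨hwcore, hvw⟩ := hwmem
  -- build a 2-core set containing v
  set T : Finset V := insert v (S ∪ coreSet G k) with hT
  have hTcore : IsCoreSet G 2 T := by
    intro x hx
    rw [hT, mem_insert, mem_union] at hx
    rcases hx with rfl | hx | hx
    · -- x = v : neighbors u and w
      have huw : u ≠ w := fun h' => hu (h' ▸ hwcore)
      have hsub : ({u, w} : Finset V) ⊆ T.filter (G.Adj x) := by
        intro y hy
        rw [mem_insert, mem_singleton] at hy
        rcases hy with rfl | rfl
        · exact mem_filter.2 ⟨by simp [hT, huS], hadj⟩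
        · exact mem_filter.2 ⟨by simp [hT, hwcore], hvw⟩
      calc (2 : ℕ) = ({u, w} : Finset V).card := by rw [card_insert_of_notMem (by simpa), card_singleton]
        _ ≤ _ := card_le_card hsub
    · refine (hS2 x hx).trans (card_le_card (filter_subset_filter _ ?_))
      intro y hy; simp [hT, hy]
    · refine le_trans hk <| (isCoreSet_coreSet G k x hx).trans
        (card_le_card (filter_subset_filter _ ?_))
      intro y hy; simp [hT, hy]
  have hvT : v ∈ coreSet G 2 := by
    rw [coreSet, mem_filter]
    exact ⟨mem_univ _, T, hTcore, by simp [hT]⟩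
  have hcard : 2 ≤ Fintype.card V := by
    have : u ≠ w := fun h' => hu (h' ▸ hwcore)
    exact Fintype.one_lt_card_iff.2 ⟨u, w, this⟩
  have : 2 ≤ coreness G v :=
    Nat.le_findGreatest hcard hvT
  omega

end
end

section
/- For any vertex v of G and any s with coreness(v) < s, the number of neighbors u of v with coreness(u) ≥ s is strictly less than s. -/
open scoped Classical
open Finset

noncomputable section

variable {V : Type*} [Fintype V]

lemma isCoreSet_anti (G : SimpleGraph V) {j k : ℕ} {S : Finset V} (hjk : j ≤ k)
    (hS : IsCoreSet G k S) : IsCoreSet G j S :=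
  fun v hv => le_trans hjk (hS v hv)

lemma mem_coreSet_of_le_coreness (G : SimpleGraph V) {u : V} {s : ℕ}
    (h : s ≤ coreness G u) : u ∈ coreSet G s := by
  have h0 : u ∈ coreSet G 0 := by
    simp only [coreSet, mem_filter, mem_univ, true_and]
    exact ⟨{u}, fun w _ => Nat.zero_le _, Finset.mem_singleton_self u⟩
  have hspec : u ∈ coreSet G (coreness G u) :=
    Nat.findGreatest_spec (P := fun k => u ∈ coreSet G k) (Nat.zero_le _) h0
  simp only [coreSet, mem_filter, mem_univ, true_and] at hspec ⊢
  obtain ⟨S, hS, hu⟩ := hspec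
  exact ⟨S, isCoreSet_anti G h hS, hu⟩

theorem card_neighbors_coreness_ge_lt (G : SimpleGraph V) (v : V) (s : ℕ)
    (h : coreness G v < s) :
    (Finset.univ.filter fun u => G.Adj v u ∧ s ≤ coreness G u).card < s := by
  by_contra hc
  push_neg at hc
  set N := Finset.univ.filter fun u => G.Adj v u ∧ s ≤ coreness G u with hN
  have hspos : 0 < s := lt_of_le_of_lt (Nat.zero_le _) h
  -- every u in N is in coreSet G s
  have hNsub : N ⊆ coreSet G s := by
    intro u hu
    simp only [hN, mem_filter, mem_univ, true_and] at hu
    exact mem_coreSet_of_le_coreness G hu.2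
  -- T = coreSet G s ∪ {v} is a core set for s
  set T := insert v (coreSet G s) with hT
  have hTcore : IsCoreSet G s T := by
    intro w hw
    rcases Finset.mem_insert.mp hw with hwv | hwc
    · subst hwv
      have : N ⊆ T.filter (G.Adj w) := by
        intro u hu
        have hu' := hu
        simp only [hN, mem_filter, mem_univ, true_and] at hu'
        exact Finset.mem_filter.mpr ⟨Finset.mem_insert_of_mem (hNsub hu), hu'.1⟩
      exact le_trans hc (Finset.card_le_card this)
    · calc s ≤ ((coreSet G s).filter (G.Adj w)).card := isCoreSet_coreSet G s w hwc
        _ ≤ (T.filter (G.Adj w)).card :=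
          Finset.card_le_card (Finset.filter_subset_filter _ (Finset.subset_insert _ _))
  have hvmem : v ∈ coreSet G s := by
    simp only [coreSet, mem_filter, mem_univ, true_and]
    exact ⟨T, hTcore, Finset.mem_insert_self _ _⟩
  have hscard : s ≤ Fintype.card V := by
    calc s ≤ N.card := hc
      _ ≤ Finset.univ.card := Finset.card_le_card (Finset.subset_univ _)
      _ = Fintype.card V := Finset.card_univ
  have : s ≤ coreness G v :=
    Nat.le_findGreatest hscard hvmem
  omega

end
end

section
/- Starting from the degree initialization c_0(v) = deg(v) and iterating the H-index update c_{t+1}(v) = H({c_t(u) : u ∈ N(v)} ), every iterate pointwise dominates the coreness function: c_t(v) ≥ coreness(v) for all t and v. -/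
open scoped Classical
open Finset

noncomputable section

variable {V : Type*} [Fintype V]

/-- The H-index of a finite multiset `S` of naturals: the largest `h` such that
at least `h` elements of `S` are `≥ h`. -/
def hIndex (S : Multiset ℕ) : ℕ :=
  Nat.findGreatest (fun h => h ≤ (S.filter (fun x => h ≤ x)).card) (Multiset.card S)

lemma coreness_mem (G : SimpleGraph V) (v : V) : v ∈ coreSet G (coreness G v) :=
  Nat.findGreatest_spec (P := fun k => v ∈ coreSet G k) (Nat.zero_le _) (mem_coreSet_zero G v)

lemma le_coreness (G : SimpleGraph V) {v : V} {k : ℕ} (hk : k ≤ Fintype.card V)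
    (h : v ∈ coreSet G k) : k ≤ coreness G v :=
  Nat.le_findGreatest hk h

lemma le_hIndex {S : Multiset ℕ} {k : ℕ} (h : k ≤ (S.filter (fun x => k ≤ x)).card) :
    k ≤ hIndex S :=
  Nat.le_findGreatest (h.trans (Multiset.card_le_card (Multiset.filter_le _ _))) h

theorem iterates_dominate_coreness (G : SimpleGraph V) (c : ℕ → V → ℕ)
    (h0 : ∀ v : V, c 0 v = G.degree v)
    (hstep : ∀ t : ℕ, ∀ v : V, c (t + 1) v = hIndex ((G.neighborFinset v).val.map (c t))) :
    ∀ t : ℕ, ∀ v : V, coreness G v ≤ c t v := by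
  intro t
  induction t with
  | zero =>
    intro v
    rw [h0]
    obtain ⟨S, hS, hvS⟩ : ∃ S : Finset V, IsCoreSet G (coreness G v) S ∧ v ∈ S := by
      have := coreness_mem G v
      simpa [coreSet] using this
    refine (hS v hvS).trans (Finset.card_le_card ?_)
    intro u hu
    rw [Finset.mem_filter] at hu
    rw [SimpleGraph.mem_neighborFinset]
    exact hu.2
  | succ t ih =>
    intro v
    rw [hstep]
    set k := coreness G v with hk
    obtain ⟨S, hS, hvS⟩ : ∃ S : Finset V, IsCoreSet G k S ∧ v ∈ S := by
      have := coreness_mem G v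
      simpa [coreSet] using this
    have hkcard : k ≤ Fintype.card V := Nat.findGreatest_le _
    -- every u ∈ S has coreness ≥ k, hence c t u ≥ k
    have hct : ∀ u ∈ S.filter (G.Adj v), k ≤ c t u := by
      intro u hu
      rw [Finset.mem_filter] at hu
      have hu' : u ∈ coreSet G k := by
        simp only [coreSet, mem_filter, mem_univ, true_and]
        exact ⟨S, hS, hu.1⟩
      exact (le_coreness G hkcard hu').trans (ih u)
    apply le_hIndex
    have hsub : (S.filter (G.Adj v)).val.map (c t) ≤
        (((G.neighborFinset v).val.map (c t)).filter (fun x => k ≤ x)) := by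
      rw [Multiset.le_filter]
      constructor
      · apply Multiset.map_le_map
        rw [Finset.val_le_iff]
        intro u hu
        rw [Finset.mem_filter] at hu
        rw [SimpleGraph.mem_neighborFinset]
        exact hu.2
      · intro a ha
        rw [Multiset.mem_map] at ha
        obtain ⟨u, hu, rfl⟩ := ha
        exact hct u hu
    calc k ≤ (S.filter (G.Adj v)).card := hS v hvS
      _ = Multiset.card ((S.filter (G.Adj v)).val.map (c t)) := by
          rw [Multiset.card_map]; rfl
      _ ≤ _ := Multiset.card_le_card hsub

end
end
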